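/- arXiv:1605.04387 — 3 statements merged into one kernel-verified Lean document; each statement's English description precedes it below -/
import Mathlib

section
/- Let (x_n)_{n≥1} be a sequence of unit vectors in a Hilbert space H with Gram matrix Γ_{n,p} = ⟨x_n, x_p⟩. If the tail off-diagonal row sums tend to zero, i.e. lim_{N→∞} sup_{n≥N} Σ_{p≥N, p≠n} |Γ_{n,p}| = 0, then (x_n) is an asymptotically orthonormal sequence: there exists N₀ such that for all N ≥ N₀ there are constants c_N, C_N > 0 with c_N Σ_{n≥N}|a_n|² ≤ ‖Σ_{n≥N} a_n x_n‖² ≤ C_N Σ_{n≥N}|a_n|² for every finitely supported complex sequence (a_n), and c_N → 1, C_N → 1 as N → ∞. -/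
open Filter

/-- `x` is an asymptotically orthonormal sequence (AOS). -/
def IsAOS {H : Type*} [NormedAddCommGroup H] [InnerProductSpace ℂ H] (x : ℕ → H) : Prop :=
  ∃ (N₀ : ℕ) (c C : ℕ → ℝ),
    Tendsto c atTop (nhds 1) ∧ Tendsto C atTop (nhds 1) ∧
    ∀ N ≥ N₀, 0 < c N ∧ 0 < C N ∧
      ∀ (s : Finset ℕ) (a : ℕ → ℂ), (∀ n ∈ s, N ≤ n) →
        c N * ∑ n ∈ s, ‖a n‖ ^ 2 ≤ ‖∑ n ∈ s, a n • x n‖ ^ 2 ∧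
        ‖∑ n ∈ s, a n • x n‖ ^ 2 ≤ C N * ∑ n ∈ s, ‖a n‖ ^ 2

private lemma expand_norm_sq {H : Type*} [NormedAddCommGroup H] [InnerProductSpace ℂ H]
    (x : ℕ → H) (hx : ∀ n, ‖x n‖ = 1) (s : Finset ℕ) (a : ℕ → ℂ) :
    (‖∑ n ∈ s, a n • x n‖ ^ 2 : ℝ) = ∑ n ∈ s, ‖a n‖ ^ 2 +
      (∑ n ∈ s, ∑ p ∈ s.erase n, (starRingEnd ℂ) (a n) * a p * inner ℂ (x n) (x p)).re := by
  have h1 : (inner ℂ (∑ n ∈ s, a n • x n) (∑ n ∈ s, a n • x n) : ℂ)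
      = ∑ n ∈ s, ∑ p ∈ s, (starRingEnd ℂ) (a n) * a p * inner ℂ (x n) (x p) := by
    rw [sum_inner]
    refine Finset.sum_congr rfl fun n hn => ?_
    rw [inner_sum]
    refine Finset.sum_congr rfl fun p hp => ?_
    rw [inner_smul_left, inner_smul_right]; ring
  have h2 : ∀ n ∈ s, ∑ p ∈ s, (starRingEnd ℂ) (a n) * a p * inner ℂ (x n) (x p)
      = (‖a n‖ ^ 2 : ℂ) + ∑ p ∈ s.erase n, (starRingEnd ℂ) (a n) * a p * inner ℂ (x n) (x p) := by
    intro n hn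
    rw [← Finset.sum_erase_add _ _ hn, add_comm]
    congr 1
    rw [inner_self_eq_norm_sq_to_K, hx n]
    simp [RCLike.conj_mul]
  rw [@norm_sq_eq_re_inner ℂ, h1, Finset.sum_congr rfl h2, Finset.sum_add_distrib]
  simp [Complex.add_re]
  norm_cast

/-- If the tail off-diagonal row sums of the Gram matrix of a sequence of unit vectors tend
to `0`, then the sequence is an asymptotically orthonormal sequence. -/
theorem stmt3 {H : Type*} [NormedAddCommGroup H] [InnerProductSpace ℂ H]
    (x : ℕ → H) (hx : ∀ n, ‖x n‖ = 1)
    (ε : ℕ → ℝ) (hε : Tendsto ε atTop (nhds 0))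
    (hΓ : ∀ N : ℕ, ∀ n ≥ N, ∀ s : Finset ℕ, (∀ p ∈ s, N ≤ p ∧ p ≠ n) →
      ∑ p ∈ s, ‖(inner ℂ (x n) (x p) : ℂ)‖ ≤ ε N) :
    IsAOS x := by
  have hε0 : ∀ N, 0 ≤ ε N := fun N => by
    simpa using hΓ N N le_rfl ∅ (by simp)
  -- key estimate
  have key : ∀ N : ℕ, ∀ (s : Finset ℕ) (a : ℕ → ℂ), (∀ n ∈ s, N ≤ n) →
      |‖∑ n ∈ s, a n • x n‖ ^ 2 - ∑ n ∈ s, ‖a n‖ ^ 2| ≤ ε N * ∑ n ∈ s, ‖a n‖ ^ 2 := by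
    intro N s a hs
    rw [expand_norm_sq x hx s a, add_sub_cancel_left]
    set E := ∑ n ∈ s, ∑ p ∈ s.erase n, (starRingEnd ℂ) (a n) * a p * inner ℂ (x n) (x p) with hE
    have habs : |E.re| ≤ ‖E‖ := Complex.abs_re_le_norm E
    refine le_trans habs ?_
    -- bound ‖E‖ by the double sum of norms
    have h1 : ‖E‖ ≤ ∑ n ∈ s, ∑ p ∈ s.erase n, ‖a n‖ * ‖a p‖ * ‖(inner ℂ (x n) (x p) : ℂ)‖ := by
      refine le_trans (norm_sum_le _ _) (Finset.sum_le_sum fun n hn => ?_)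
      refine le_trans (norm_sum_le _ _) (Finset.sum_le_sum fun p hp => ?_)
      rw [norm_mul, norm_mul, RCLike.norm_conj]
    refine le_trans h1 ?_
    -- AM-GM on each term
    have h2 : ∑ n ∈ s, ∑ p ∈ s.erase n, ‖a n‖ * ‖a p‖ * ‖(inner ℂ (x n) (x p) : ℂ)‖
        ≤ ∑ n ∈ s, ∑ p ∈ s.erase n,
            (‖a n‖ ^ 2 / 2 + ‖a p‖ ^ 2 / 2) * ‖(inner ℂ (x n) (x p) : ℂ)‖ := by
      refine Finset.sum_le_sum fun n hn => Finset.sum_le_sum fun p hp => ?_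
      have hg : (0:ℝ) ≤ ‖(inner ℂ (x n) (x p) : ℂ)‖ := norm_nonneg _
      nlinarith [sq_nonneg (‖a n‖ - ‖a p‖), norm_nonneg (a n), norm_nonneg (a p)]
    refine le_trans h2 ?_
    have hrow : ∀ n ∈ s, ∑ p ∈ s.erase n, ‖(inner ℂ (x n) (x p) : ℂ)‖ ≤ ε N := by
      intro n hn
      exact hΓ N n (hs n hn) (s.erase n) fun p hp =>
        ⟨hs p (Finset.mem_of_mem_erase hp), Finset.ne_of_mem_erase hp⟩
    have hsplit : ∑ n ∈ s, ∑ p ∈ s.erase n,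
          (‖a n‖ ^ 2 / 2 + ‖a p‖ ^ 2 / 2) * ‖(inner ℂ (x n) (x p) : ℂ)‖
        = (∑ n ∈ s, ∑ p ∈ s.erase n, ‖a n‖ ^ 2 / 2 * ‖(inner ℂ (x n) (x p) : ℂ)‖)
        + ∑ n ∈ s, ∑ p ∈ s.erase n, ‖a p‖ ^ 2 / 2 * ‖(inner ℂ (x n) (x p) : ℂ)‖ := by
      rw [← Finset.sum_add_distrib]
      refine Finset.sum_congr rfl fun n _ => ?_
      rw [← Finset.sum_add_distrib]
      exact Finset.sum_congr rfl fun p _ => by ring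
    rw [hsplit]
    have hA : ∑ n ∈ s, ∑ p ∈ s.erase n, ‖a n‖ ^ 2 / 2 * ‖(inner ℂ (x n) (x p) : ℂ)‖
        ≤ ε N / 2 * ∑ n ∈ s, ‖a n‖ ^ 2 := by
      rw [Finset.mul_sum]
      refine Finset.sum_le_sum fun n hn => ?_
      rw [← Finset.mul_sum]
      calc ‖a n‖ ^ 2 / 2 * ∑ p ∈ s.erase n, ‖(inner ℂ (x n) (x p) : ℂ)‖
          ≤ ‖a n‖ ^ 2 / 2 * ε N := by
            apply mul_le_mul_of_nonneg_left (hrow n hn) (by positivity)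
        _ = ε N / 2 * ‖a n‖ ^ 2 := by ring
    have hB : ∑ n ∈ s, ∑ p ∈ s.erase n, ‖a p‖ ^ 2 / 2 * ‖(inner ℂ (x n) (x p) : ℂ)‖
        ≤ ε N / 2 * ∑ n ∈ s, ‖a n‖ ^ 2 := by
      have hswap : ∑ n ∈ s, ∑ p ∈ s.erase n, ‖a p‖ ^ 2 / 2 * ‖(inner ℂ (x n) (x p) : ℂ)‖
          = ∑ p ∈ s, ∑ n ∈ s.erase p, ‖a p‖ ^ 2 / 2 * ‖(inner ℂ (x n) (x p) : ℂ)‖ := by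
        refine Finset.sum_comm' ?_
        intro n p
        simp only [Finset.mem_erase, ne_eq]
        constructor
        · rintro ⟨hn, hpn, hps⟩
          exact ⟨⟨Ne.symm hpn, hn⟩, hps⟩
        · rintro ⟨⟨hnp, hns⟩, hps⟩
          exact ⟨hns, Ne.symm hnp, hps⟩
      rw [hswap, Finset.mul_sum]
      refine Finset.sum_le_sum fun p hp => ?_
      rw [← Finset.mul_sum]
      have hsym : ∑ n ∈ s.erase p, ‖(inner ℂ (x n) (x p) : ℂ)‖
          = ∑ n ∈ s.erase p, ‖(inner ℂ (x p) (x n) : ℂ)‖ := by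
        refine Finset.sum_congr rfl fun n _ => ?_
        rw [← inner_conj_symm, RCLike.norm_conj]
      calc ‖a p‖ ^ 2 / 2 * ∑ n ∈ s.erase p, ‖(inner ℂ (x n) (x p) : ℂ)‖
          ≤ ‖a p‖ ^ 2 / 2 * ε N := by
            rw [hsym]
            exact mul_le_mul_of_nonneg_left (hrow p hp) (by positivity)
        _ = ε N / 2 * ‖a p‖ ^ 2 := by ring
    linarith
  -- choose N₀
  have hhalf : ∀ᶠ N in atTop, ε N < 1/2 := by
    have := hε.eventually (eventually_lt_nhds (by norm_num : (0:ℝ) < 1/2))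
    exact this
  obtain ⟨N₀, hN₀⟩ := eventually_atTop.mp hhalf
  refine ⟨N₀, fun N => 1 - min (ε N) (1/2), fun N => 1 + ε N, ?_, ?_, ?_⟩
  · have : Tendsto (fun N => min (ε N) (1/2 : ℝ)) atTop (nhds 0) := by
      have := hε.min (tendsto_const_nhds (x := (1/2 : ℝ)))
      simpa using this
    simpa using tendsto_const_nhds.sub this
  · simpa using tendsto_const_nhds.add hε
  · intro N hN
    have hlt : ε N < 1/2 := hN₀ N hN
    have hmin : min (ε N) (1/2 : ℝ) = ε N := min_eq_left hlt.le
    refine ⟨?_, ?_, fun s a hs => ?_⟩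
    · show 0 < 1 - min (ε N) (1/2)
      rw [hmin]; linarith
    · show 0 < 1 + ε N
      linarith [hε0 N]
    have hk := key N s a hs
    have hS : (0:ℝ) ≤ ∑ n ∈ s, ‖a n‖ ^ 2 :=
      Finset.sum_nonneg fun n _ => by positivity
    rw [abs_le] at hk
    constructor
    · show (1 - min (ε N) (1/2)) * ∑ n ∈ s, ‖a n‖ ^ 2 ≤ ‖∑ n ∈ s, a n • x n‖ ^ 2
      rw [hmin]; nlinarith [hk.1]
    · show ‖∑ n ∈ s, a n • x n‖ ^ 2 ≤ (1 + ε N) * ∑ n ∈ s, ‖a n‖ ^ 2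
      nlinarith [hk.2]
end

section
/- Let b ∈ H^∞(ℂ₊) with ‖b‖_∞ ≤ 1, and λ_n, μ_n ∈ ℂ₊ with |λ_n − μ_n| ≤ ε_n Im λ_n where ε_n → 0. Then ‖k_{μ_n}^b‖_b / ‖k_{λ_n}^b‖_b → 1 as n → ∞, where ‖k_z^b‖_b² = (1−|b(z)|²)/(4π Im z). -/
open Filter Real Metric

lemma aux_id (a u : ℂ) : Complex.normSq (1 - (starRingEnd ℂ) a * u) - Complex.normSq (u - a)
    = (1 - Complex.normSq a) * (1 - Complex.normSq u) := by
  simp only [Complex.normSq_apply, Complex.sub_re, Complex.sub_im, Complex.mul_re, Complex.mul_im,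
    Complex.conj_re, Complex.conj_im, Complex.one_re, Complex.one_im]
  ring

lemma aux_id2 (a v : ℂ) : Complex.normSq (1 + (starRingEnd ℂ) a * v) - Complex.normSq (v + a)
    = (1 - Complex.normSq a) * (1 - Complex.normSq v) := by
  simp only [Complex.normSq_apply, Complex.add_re, Complex.add_im, Complex.mul_re, Complex.mul_im,
    Complex.conj_re, Complex.conj_im, Complex.one_re, Complex.one_im]
  ring

lemma abs_le_abs_of_normSq (x y : ℂ) (h : Complex.normSq x ≤ Complex.normSq y) :
    ‖x‖ ≤ ‖y‖ := by
  rw [Complex.norm_def, Complex.norm_def]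
  exact Real.sqrt_le_sqrt h

lemma schwarz_closed {g : ℂ → ℂ} (hd : DifferentiableOn ℂ g (ball 0 1))
    (hm : ∀ w ∈ ball (0:ℂ) 1, ‖g w‖ ≤ 1) (h0 : g 0 = 0) {w : ℂ}
    (hw : w ∈ ball (0:ℂ) 1) : ‖g w‖ ≤ ‖w‖ := by
  have key : ∀ R : ℝ, 1 < R → ‖g w‖ ≤ R * ‖w‖ := by
    intro R hR
    have hmaps : Set.MapsTo g (ball 0 1) (closedBall (g 0) R) := by
      intro x hx
      rw [h0, mem_closedBall_zero_iff]
      exact (hm x hx).trans hR.le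
    have := Complex.dist_le_div_mul_dist_of_mapsTo_ball hd hmaps hw
    simpa [h0, Complex.dist_eq] using this
  have : ∀ η : ℝ, 0 < η → ‖g w‖ ≤ ‖w‖ + η := by
    intro η hη
    have h1 : (1:ℝ) < 1 + η / (‖w‖ + 1) := by
      have : 0 < η / (‖w‖ + 1) := by positivity
      linarith
    have := key _ h1
    have hw1 : ‖w‖ ≤ ‖w‖ + 1 := by linarith
    have h2 : η / (‖w‖ + 1) * ‖w‖ ≤ η := by
      rw [div_mul_eq_mul_div, div_le_iff₀ (by positivity)]
      nlinarith [norm_nonneg w]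
    nlinarith [norm_nonneg w]
  exact le_of_forall_pos_le_add this

lemma ratio_lower {a u : ℂ} {ρ : ℝ} (ha : ‖a‖ ≤ 1) (hu : ‖u‖ ≤ 1)
    (hD : (1 : ℂ) - (starRingEnd ℂ) a * u ≠ 0) (hρ0 : 0 ≤ ρ) (hρ1 : ρ < 1)
    (h : ‖u - a‖ ≤ ρ * ‖1 - (starRingEnd ℂ) a * u‖) :
    (1 - ρ) / (1 + ρ) * (1 - ‖a‖ ^ 2) ≤ 1 - ‖u‖ ^ 2 := by
  have hDpos : 0 < ‖1 - (starRingEnd ℂ) a * u‖ := norm_pos_iff.mpr hD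
  set v : ℂ := (u - a) / (1 - (starRingEnd ℂ) a * u) with hvdef
  have hp : ‖v‖ ≤ ρ := by
    rw [hvdef, norm_div, div_le_iff₀ hDpos]; exact h
  have huE : u * (1 + (starRingEnd ℂ) a * v) = v + a := by
    have h' : v * (1 - (starRingEnd ℂ) a * u) = u - a := by
      rw [hvdef]; exact div_mul_cancel₀ _ hD
    linear_combination -h'
  have hE2 : Complex.normSq u * Complex.normSq (1 + (starRingEnd ℂ) a * v)
      = Complex.normSq (v + a) := by
    rw [← map_mul, huE]
  have key : Complex.normSq (1 + (starRingEnd ℂ) a * v) * (1 - Complex.normSq u)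
      = (1 - Complex.normSq a) * (1 - Complex.normSq v) := by
    have := aux_id2 a v
    nlinarith [this, hE2]
  have hEub : ‖1 + (starRingEnd ℂ) a * v‖ ≤ 1 + ρ := by
    calc ‖1 + (starRingEnd ℂ) a * v‖
        ≤ ‖1‖ + ‖(starRingEnd ℂ) a * v‖ := norm_add_le _ _
      _ = 1 + ‖a‖ * ‖v‖ := by simp [map_mul]
      _ ≤ 1 + ρ := by nlinarith [norm_nonneg v, norm_nonneg a]
  have hEsq : Complex.normSq (1 + (starRingEnd ℂ) a * v) ≤ (1 + ρ) ^ 2 := by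
    rw [← Complex.sq_norm]
    have := norm_nonneg (1 + (starRingEnd ℂ) a * v)
    nlinarith
  have hnv : Complex.normSq v ≤ ρ ^ 2 := by
    rw [← Complex.sq_norm]; nlinarith [norm_nonneg v]
  have hnu : Complex.normSq u ≤ 1 := by rw [← Complex.sq_norm]; nlinarith [norm_nonneg u]
  have hna : Complex.normSq a ≤ 1 := by rw [← Complex.sq_norm]; nlinarith [norm_nonneg a]
  rw [Complex.sq_norm, Complex.sq_norm, div_mul_eq_mul_div, div_le_iff₀ (by linarith)]
  nlinarith [key, hEsq, hnv, hnu, hna, Complex.normSq_nonneg v,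
    Complex.normSq_nonneg (1 + (starRingEnd ℂ) a * v)]

lemma sp (b : ℂ → ℂ) (hb_holo : DifferentiableOn ℂ b {z : ℂ | 0 < z.im})
    (hb_bdd : ∀ z : ℂ, 0 < z.im → ‖b z‖ ≤ 1)
    (l m : ℂ) (hl : 0 < l.im) (hm : 0 < m.im) (ha : ‖b l‖ < 1) :
    ‖b m - b l‖ * ‖m - (starRingEnd ℂ) l‖ ≤
      ‖m - l‖ * ‖1 - (starRingEnd ℂ) (b l) * b m‖ := by
  set a : ℂ := b l with hadef
  set T : ℂ → ℂ := fun w => (l - (starRingEnd ℂ) l * w) / (1 - w) with hTdef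
  -- basic facts on the ball
  have hw1 : ∀ w ∈ ball (0:ℂ) 1, (1:ℂ) - w ≠ 0 := by
    intro w hw
    rw [mem_ball_zero_iff] at hw
    intro hc
    have : w = 1 := by linear_combination -hc
    rw [this] at hw; simp at hw
  have hTim : ∀ w ∈ ball (0:ℂ) 1, 0 < (T w).im := by
    intro w hw
    have hns : Complex.normSq w < 1 := by
      rw [mem_ball_zero_iff] at hw
      rw [Complex.normSq_eq_norm_sq]
      nlinarith [norm_nonneg w]
    have hd0 : 0 < Complex.normSq (1 - w) := Complex.normSq_pos.2 (hw1 w hw)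
    rw [hTdef]
    simp only [Complex.div_im]
    rw [div_sub_div_same]
    apply div_pos _ hd0
    have : (l - (starRingEnd ℂ) l * w).im * (1 - w).re -
        (l - (starRingEnd ℂ) l * w).re * (1 - w).im = l.im * (1 - Complex.normSq w) := by
      simp only [Complex.normSq_apply, Complex.sub_re, Complex.sub_im, Complex.mul_re,
        Complex.mul_im, Complex.conj_re, Complex.conj_im, Complex.one_re, Complex.one_im]
      ring
    rw [this]
    nlinarith
  have hTdiff : DifferentiableOn ℂ T (ball 0 1) := by
    apply DifferentiableOn.div
    · exact (differentiable_const l).differentiableOn.sub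
        ((differentiable_const _).mul differentiable_id).differentiableOn
    · exact (differentiable_const (1:ℂ)).differentiableOn.sub differentiable_id.differentiableOn
    · exact hw1
  have hbT : DifferentiableOn ℂ (fun w => b (T w)) (ball 0 1) :=
    hb_holo.comp hTdiff (fun w hw => hTim w hw)
  have habsle : ∀ w ∈ ball (0:ℂ) 1, ‖b (T w)‖ ≤ 1 :=
    fun w hw => hb_bdd _ (hTim w hw)
  have hDen : ∀ w ∈ ball (0:ℂ) 1, (1:ℂ) - (starRingEnd ℂ) a * b (T w) ≠ 0 := by
    intro w hw hc
    have h1 : ‖(starRingEnd ℂ) a * b (T w)‖ < 1 := by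
      rw [norm_mul, Complex.norm_conj]
      nlinarith [habsle w hw, norm_nonneg (b (T w)), norm_nonneg a]
    have : (starRingEnd ℂ) a * b (T w) = 1 := by linear_combination -hc
    rw [this] at h1; simp at h1
  set g : ℂ → ℂ := fun w => (b (T w) - a) / (1 - (starRingEnd ℂ) a * b (T w)) with hgdef
  have hgdiff : DifferentiableOn ℂ g (ball 0 1) := by
    apply DifferentiableOn.div
    · exact hbT.sub (differentiable_const a).differentiableOn
    · exact (differentiableOn_const 1).sub (hbT.const_mul _)
    · exact hDen
  have hgle : ∀ w ∈ ball (0:ℂ) 1, ‖g w‖ ≤ 1 := by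
    intro w hw
    rw [hgdef]
    simp only [norm_div]
    rw [div_le_one (norm_pos_iff.mpr (hDen w hw))]
    apply abs_le_abs_of_normSq
    have h1 := aux_id a (b (T w))
    have h2 : Complex.normSq a ≤ 1 := by
      rw [Complex.normSq_eq_norm_sq]; nlinarith [norm_nonneg a]
    have h3 : Complex.normSq (b (T w)) ≤ 1 := by
      rw [Complex.normSq_eq_norm_sq]; nlinarith [habsle w hw, norm_nonneg (b (T w))]
    nlinarith
  have hT0 : T 0 = l := by rw [hTdef]; simp
  have hg0 : g 0 = 0 := by rw [hgdef]; simp only [hT0, ← hadef, sub_self, zero_div]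
  -- the point w₀
  have hml : m - (starRingEnd ℂ) l ≠ 0 := by
    intro hc
    have : (m - (starRingEnd ℂ) l).im = 0 := by rw [hc]; simp
    simp only [Complex.sub_im, Complex.conj_im] at this
    linarith
  set w₀ : ℂ := (m - l) / (m - (starRingEnd ℂ) l) with hw₀def
  have hkey : Complex.normSq (m - (starRingEnd ℂ) l) - Complex.normSq (m - l)
      = 4 * l.im * m.im := by
    simp only [Complex.normSq_apply, Complex.sub_re, Complex.sub_im, Complex.conj_re,
      Complex.conj_im]
    ring
  have habsml : ‖m - l‖ < ‖m - (starRingEnd ℂ) l‖ := by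
    have h1 : Complex.normSq (m - l) < Complex.normSq (m - (starRingEnd ℂ) l) := by nlinarith
    rw [Complex.norm_def, Complex.norm_def]
    exact Real.sqrt_lt_sqrt (Complex.normSq_nonneg _) h1
  have hw₀mem : w₀ ∈ ball (0:ℂ) 1 := by
    rw [mem_ball_zero_iff, hw₀def, norm_div,
      div_lt_one (norm_pos_iff.mpr hml)]
    exact habsml
  have hll : l - (starRingEnd ℂ) l ≠ 0 := by
    intro hc
    have : (l - (starRingEnd ℂ) l).im = 0 := by rw [hc]; simp
    simp only [Complex.sub_im, Complex.conj_im] at this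
    linarith
  have hTw₀ : T w₀ = m := by
    have hrfl : T w₀ = (l - (starRingEnd ℂ) l * ((m - l) / (m - (starRingEnd ℂ) l))) /
        (1 - (m - l) / (m - (starRingEnd ℂ) l)) := rfl
    rw [hrfl]
    rw [div_eq_iff]
    · field_simp
      ring
    · intro hc
      rw [sub_eq_zero] at hc
      have h2 : (m - l) / (m - (starRingEnd ℂ) l) * (m - (starRingEnd ℂ) l) = m - l := by
        field_simp
      rw [← hc, one_mul] at h2
      exact hll (by linear_combination h2)
  have hD' : (1:ℂ) - (starRingEnd ℂ) a * b m ≠ 0 := by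
    have := hDen w₀ hw₀mem; rwa [hTw₀] at this
  have hgw : g w₀ = (b m - a) / (1 - (starRingEnd ℂ) a * b m) := by
    rw [hgdef]; simp only [hTw₀]
  have hs := schwarz_closed hgdiff hgle hg0 hw₀mem
  rw [hgw, hw₀def, norm_div, norm_div,
    div_le_div_iff₀ (norm_pos_iff.mpr hD') (norm_pos_iff.mpr hml)] at hs
  rw [hadef] at hs
  linarith

/-- If `b` is in the unit ball of `H^∞(ℂ₊)` and `|λ_n − μ_n| ≤ ε_n Im λ_n` with `ε_n → 0`,
then `‖k_{μ_n}^b‖_b / ‖k_{λ_n}^b‖_b → 1`, where `‖k_z^b‖_b² = (1−|b(z)|²)/(4π Im z)`. -/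
theorem stmt12 (b : ℂ → ℂ)
    (hb_holo : DifferentiableOn ℂ b {z : ℂ | 0 < z.im})
    (hb_bdd : ∀ z : ℂ, 0 < z.im → ‖b z‖ ≤ 1)
    (lam mu : ℕ → ℂ) (hlam : ∀ n, 0 < (lam n).im) (hmu : ∀ n, 0 < (mu n).im)
    (hblam : ∀ n, ‖b (lam n)‖ < 1)
    (ε : ℕ → ℝ) (hεpos : ∀ n, 0 < ε n) (hε : Tendsto ε atTop (nhds 0))
    (hclose : ∀ n, ‖lam n - mu n‖ ≤ ε n * (lam n).im) :
    Tendsto (fun n =>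
      Real.sqrt ((1 - ‖b (mu n)‖ ^ 2) / (4 * π * (mu n).im)) /
      Real.sqrt ((1 - ‖b (lam n)‖ ^ 2) / (4 * π * (lam n).im)))
      atTop (nhds 1) := by
  set A : ℕ → ℝ := fun n => 1 - ‖b (mu n)‖ ^ 2 with hAdef
  set B : ℕ → ℝ := fun n => 1 - ‖b (lam n)‖ ^ 2 with hBdef
  set ρ : ℕ → ℝ := fun n => ‖mu n - lam n‖ / ‖mu n - (starRingEnd ℂ) (lam n)‖ with hρdef
  set Q : ℕ → ℝ := fun n => (A n * (lam n).im) / (B n * (mu n).im) with hQdef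
  have hdenpos : ∀ n, 0 < ‖mu n - (starRingEnd ℂ) (lam n)‖ := by
    intro n
    have h1 : (mu n - (starRingEnd ℂ) (lam n)).im = (mu n).im + (lam n).im := by
      simp [Complex.sub_im, Complex.conj_im]
    have h2 := Complex.abs_im_le_norm (mu n - (starRingEnd ℂ) (lam n))
    rw [h1] at h2
    have := abs_le.mp h2
    nlinarith [hlam n, hmu n, this.2, this.1]
  have hdenge : ∀ n, (lam n).im ≤ ‖mu n - (starRingEnd ℂ) (lam n)‖ := by
    intro n
    have h1 : (mu n - (starRingEnd ℂ) (lam n)).im = (mu n).im + (lam n).im := by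
      simp [Complex.sub_im, Complex.conj_im]
    have h2 := Complex.abs_im_le_norm (mu n - (starRingEnd ℂ) (lam n))
    rw [h1] at h2
    have := abs_le.mp h2
    nlinarith [hlam n, hmu n]
  have habsml : ∀ n, ‖mu n - lam n‖ < ‖mu n - (starRingEnd ℂ) (lam n)‖ := by
    intro n
    have hkey : Complex.normSq (mu n - (starRingEnd ℂ) (lam n)) - Complex.normSq (mu n - lam n)
        = 4 * (lam n).im * (mu n).im := by
      simp only [Complex.normSq_apply, Complex.sub_re, Complex.sub_im, Complex.conj_re,
        Complex.conj_im]
      ring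
    have h1 : Complex.normSq (mu n - lam n) < Complex.normSq (mu n - (starRingEnd ℂ) (lam n)) := by
      nlinarith [hlam n, hmu n]
    rw [Complex.norm_def, Complex.norm_def]
    exact Real.sqrt_lt_sqrt (Complex.normSq_nonneg _) h1
  have hρ0 : ∀ n, 0 ≤ ρ n := fun n => div_nonneg (norm_nonneg _) (norm_nonneg _)
  have hρ1 : ∀ n, ρ n < 1 := fun n => (div_lt_one (hdenpos n)).2 (habsml n)
  have hρε : ∀ n, ρ n ≤ ε n := by
    intro n
    rw [hρdef, div_le_iff₀ (hdenpos n)]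
    have h1 : ‖mu n - lam n‖ = ‖lam n - mu n‖ := by
      rw [← norm_neg]; ring_nf
    rw [h1]
    calc ‖lam n - mu n‖ ≤ ε n * (lam n).im := hclose n
      _ ≤ ε n * ‖mu n - (starRingEnd ℂ) (lam n)‖ := by
          exact mul_le_mul_of_nonneg_left (hdenge n) (le_of_lt (hεpos n))
  have hBpos : ∀ n, 0 < B n := by
    intro n
    have := hblam n
    have := norm_nonneg (b (lam n))
    simp only [hBdef]
    nlinarith
  have hsp' : ∀ n, ‖b (mu n) - b (lam n)‖ ≤
      ρ n * ‖1 - (starRingEnd ℂ) (b (lam n)) * b (mu n)‖ := by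
    intro n
    rw [hρdef, div_mul_eq_mul_div, le_div_iff₀ (hdenpos n)]
    exact sp b hb_holo hb_bdd (lam n) (mu n) (hlam n) (hmu n) (hblam n)
  have hD : ∀ n, (1 : ℂ) - (starRingEnd ℂ) (b (lam n)) * b (mu n) ≠ 0 := by
    intro n hc
    have h1 : ‖(starRingEnd ℂ) (b (lam n)) * b (mu n)‖ < 1 := by
      rw [norm_mul, Complex.norm_conj]
      nlinarith [hb_bdd (mu n) (hmu n), hblam n, norm_nonneg (b (mu n)),
        norm_nonneg (b (lam n))]
    have : (starRingEnd ℂ) (b (lam n)) * b (mu n) = 1 := by linear_combination -hc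
    rw [this] at h1; simp at h1
  have lower1 : ∀ n, (1 - ρ n) / (1 + ρ n) * B n ≤ A n := by
    intro n
    exact ratio_lower (le_of_lt (hblam n)) (hb_bdd (mu n) (hmu n)) (hD n) (hρ0 n) (hρ1 n) (hsp' n)
  have lower2 : ∀ n, (1 - ρ n) / (1 + ρ n) * A n ≤ B n := by
    intro n
    have hD' : (1 : ℂ) - (starRingEnd ℂ) (b (mu n)) * b (lam n) ≠ 0 := by
      intro hc
      apply hD n
      have := congrArg (starRingEnd ℂ) hc
      simp only [map_sub, map_mul, map_one, Complex.conj_conj, map_zero] at this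
      rw [← this]; ring
    have hsw : ‖b (lam n) - b (mu n)‖ ≤
        ρ n * ‖1 - (starRingEnd ℂ) (b (mu n)) * b (lam n)‖ := by
      have e1 : ‖b (lam n) - b (mu n)‖ = ‖b (mu n) - b (lam n)‖ := by
        rw [← norm_neg]; ring_nf
      have e2 : (1 : ℂ) - (starRingEnd ℂ) (b (mu n)) * b (lam n)
          = (starRingEnd ℂ) (1 - (starRingEnd ℂ) (b (lam n)) * b (mu n)) := by
        simp only [map_sub, map_mul, map_one, Complex.conj_conj]; ring
      rw [e1, e2, Complex.norm_conj]
      exact hsp' n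
    exact ratio_lower (hb_bdd (mu n) (hmu n)) (le_of_lt (hblam n)) hD' (hρ0 n) (hρ1 n) hsw
  have hApos : ∀ n, 0 < A n := by
    intro n
    have h1 := lower1 n
    have h2 : 0 < (1 - ρ n) / (1 + ρ n) * B n := by
      apply mul_pos _ (hBpos n)
      apply div_pos <;> nlinarith [hρ0 n, hρ1 n]
    exact lt_of_lt_of_le h2 h1
  have hIm1 : ∀ n, (mu n).im ≤ (1 + ε n) * (lam n).im := by
    intro n
    have h1 := Complex.abs_im_le_norm (lam n - mu n)
    have h2 : (lam n - mu n).im = (lam n).im - (mu n).im := by simp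
    rw [h2] at h1
    have := abs_le.mp (le_trans h1 (hclose n))
    nlinarith [this.1]
  have hIm2 : ∀ n, (1 - ε n) * (lam n).im ≤ (mu n).im := by
    intro n
    have h1 := Complex.abs_im_le_norm (lam n - mu n)
    have h2 : (lam n - mu n).im = (lam n).im - (mu n).im := by simp
    rw [h2] at h1
    have := abs_le.mp (le_trans h1 (hclose n))
    nlinarith [this.2]
  -- multiplied-out versions
  have f1 : ∀ n, (1 - ε n) * B n ≤ (1 + ε n) * A n := by
    intro n
    have h := lower1 n
    rw [div_mul_eq_mul_div, div_le_iff₀ (by nlinarith [hρ0 n] : (0:ℝ) < 1 + ρ n)] at h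
    nlinarith [hρε n, hρ0 n, hBpos n, hApos n]
  have f2 : ∀ n, (1 - ε n) * A n ≤ (1 + ε n) * B n := by
    intro n
    have h := lower2 n
    rw [div_mul_eq_mul_div, div_le_iff₀ (by nlinarith [hρ0 n] : (0:ℝ) < 1 + ρ n)] at h
    nlinarith [hρε n, hρ0 n, hBpos n, hApos n]
  have hev : ∀ᶠ n in atTop, ε n < 1 / 2 := hε.eventually_lt_const (by norm_num)
  have hlo : ∀ n, ε n < 1 / 2 → (1 - ε n) / (1 + ε n) ^ 2 ≤ Q n := by
    intro n hn
    have hε1 : ε n < 1 := by linarith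
    rw [hQdef, div_le_div_iff₀ (by nlinarith [hεpos n]) (mul_pos (hBpos n) (hmu n))]
    nlinarith [f1 n, hIm1 n, hBpos n, hApos n, hlam n, hmu n, hεpos n,
      mul_le_mul_of_nonneg_right (f1 n) (le_of_lt (mul_pos (by nlinarith [hεpos n] : (0:ℝ) < 1 + ε n) (hlam n))),
      mul_le_mul_of_nonneg_left (hIm1 n) (le_of_lt (mul_pos (by nlinarith : (0:ℝ) < 1 - ε n) (hBpos n)))]
  have hhi : ∀ n, ε n < 1 / 2 → Q n ≤ (1 + ε n) / (1 - ε n) ^ 2 := by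
    intro n hn
    have hε1 : ε n < 1 := by linarith
    rw [hQdef, div_le_div_iff₀ (mul_pos (hBpos n) (hmu n)) (by nlinarith)]
    nlinarith [f2 n, hIm2 n, hBpos n, hApos n, hlam n, hmu n, hεpos n,
      mul_le_mul_of_nonneg_right (f2 n) (le_of_lt (mul_pos (by nlinarith : (0:ℝ) < 1 - ε n) (hlam n))),
      mul_le_mul_of_nonneg_left (hIm2 n) (le_of_lt (mul_pos (by nlinarith [hεpos n] : (0:ℝ) < 1 + ε n) (hApos n)))]
  have hL : Tendsto (fun n => (1 - ε n) / (1 + ε n) ^ 2) atTop (nhds 1) := by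
    have ha : Tendsto (fun n => 1 - ε n) atTop (nhds (1 - 0)) := tendsto_const_nhds.sub hε
    have hb : Tendsto (fun n => (1 + ε n) ^ 2) atTop (nhds ((1 + 0) ^ 2)) :=
      (tendsto_const_nhds.add hε).pow 2
    have h := ha.div hb (by norm_num)
    norm_num at h
    exact h
  have hU : Tendsto (fun n => (1 + ε n) / (1 - ε n) ^ 2) atTop (nhds 1) := by
    have ha : Tendsto (fun n => 1 + ε n) atTop (nhds (1 + 0)) := tendsto_const_nhds.add hε
    have hb : Tendsto (fun n => (1 - ε n) ^ 2) atTop (nhds ((1 - 0) ^ 2)) :=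
      (tendsto_const_nhds.sub hε).pow 2
    have h := ha.div hb (by norm_num)
    norm_num at h
    exact h
  have hQlim : Tendsto Q atTop (nhds 1) :=
    tendsto_of_tendsto_of_tendsto_of_le_of_le' hL hU
      (hev.mono fun n hn => hlo n hn) (hev.mono fun n hn => hhi n hn)
  have hsq : Tendsto (fun n => Real.sqrt (Q n)) atTop (nhds 1) := by
    have h := (Real.continuous_sqrt.tendsto 1).comp hQlim
    simpa [Function.comp_def] using h
  apply hsq.congr
  intro n
  have hπ : (0:ℝ) < π := Real.pi_pos
  have h1 : (0:ℝ) ≤ A n / (4 * π * (mu n).im) :=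
    div_nonneg (le_of_lt (hApos n)) (by nlinarith [Real.pi_pos, hmu n])
  have h2 : A n / (4 * π * (mu n).im) / (B n / (4 * π * (lam n).im)) = Q n := by
    rw [hQdef]
    rw [div_div_div_eq]
    rw [div_eq_div_iff (ne_of_gt (mul_pos (mul_pos (by positivity : (0:ℝ) < 4 * π) (hmu n)) (hBpos n))) (mul_pos (hBpos n) (hmu n)).ne']
    ring
  rw [← h2, Real.sqrt_div h1]
end

section
/- Let (λ_n)_{n≥1} ⊂ ℂ be a sequence with sup_n |Im λ_n| < ∞ and |λ_{n+1}/λ_n| > q for some q > 1 and all n. Then for every a > 0 the normalized exponentials χ^a_{λ_n}(t) = (2 Im λ_n/(1 − e^{−2a Im λ_n}))^{1/2} e^{iλ_n t} form an asymptotically orthonormal sequence in L²(0,a): there exists N₀ such that for all N ≥ N₀ there are c_N, C_N > 0 with c_N Σ_{n≥N}|a_n|² ≤ ‖Σ_{n≥N} a_n χ^a_{λ_n}‖² ≤ C_N Σ_{n≥N}|a_n|² for finitely supported (a_n), and c_N, C_N → 1. -/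
open Filter MeasureTheory

/-- Normalizing constant making `e^{iλt}` a unit vector in `L²(0,a)`; when `Im λ = 0`
it is interpreted as `√(1/a)`. -/
noncomputable def normFac (a : ℝ) (lam : ℂ) : ℝ :=
  if lam.im = 0 then Real.sqrt (1 / a)
  else Real.sqrt (2 * lam.im / (1 - Real.exp (-2 * a * lam.im)))

open Complex

section Aux

lemma mul_conj_cexp (l m : ℂ) (t : ℝ) :
    Complex.exp (I*l*t) * (starRingEnd ℂ) (Complex.exp (I*m*t)) =
      Complex.exp (I*(l - (starRingEnd ℂ) m)*t) := by
  rw [← Complex.exp_conj, ← Complex.exp_add]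
  congr 1
  simp only [map_mul, Complex.conj_I, Complex.conj_ofReal]
  ring

lemma integral_cexp_Ioo (a : ℝ) (ha : 0 < a) (c : ℂ) (hc : c ≠ 0) :
    ∫ t in Set.Ioo (0:ℝ) a, Complex.exp (c * t) =
      (Complex.exp (c * a) - 1) / c := by
  rw [← MeasureTheory.integral_Ioc_eq_integral_Ioo,
    ← intervalIntegral.integral_of_le ha.le,
    integral_exp_mul_complex hc]
  simp

lemma denom_ne (a β : ℝ) (ha : 0 < a) (hβ : β ≠ 0) :
    1 - Real.exp (-2 * a * β) ≠ 0 := by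
  intro h
  have : Real.exp (-2*a*β) = 1 := by linarith
  rw [Real.exp_eq_one_iff] at this
  have h3 : (-2*a) * β = 0 := by linarith [this]
  rcases mul_eq_zero.mp h3 with h' | h'
  · nlinarith
  · exact hβ h'

lemma normFacArg_pos (a β : ℝ) (ha : 0 < a) (hβ : β ≠ 0) :
    0 < 2 * β / (1 - Real.exp (-2 * a * β)) := by
  rcases lt_or_gt_of_ne hβ with h | h
  · have : 1 < Real.exp (-2*a*β) := by
      rw [← Real.exp_zero]; exact Real.exp_lt_exp.mpr (by nlinarith)
    apply div_pos_of_neg_of_neg <;> nlinarith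
  · have : Real.exp (-2*a*β) < 1 := by
      rw [← Real.exp_zero]; exact Real.exp_lt_exp.mpr (by nlinarith)
    apply div_pos <;> nlinarith

lemma normFacArg_le (a M β : ℝ) (ha : 0 < a) (hM : |β| ≤ M) (hβ : β ≠ 0) :
    2 * β / (1 - Real.exp (-2 * a * β)) ≤ Real.exp (2*a*M)/a := by
  have hM0 : 0 ≤ M := le_trans (abs_nonneg β) hM
  have hexpM : (1:ℝ) ≤ Real.exp (2*a*M) := by
    rw [← Real.exp_zero]; exact Real.exp_le_exp.mpr (by nlinarith)
  rcases lt_or_gt_of_ne hβ with h | h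
  · have hy : 0 < -2*a*β := by nlinarith
    have he : -2*a*β + 1 ≤ Real.exp (-2*a*β) := by
      have := Real.add_one_le_exp (-2*a*β); linarith
    have h1 : 2 * β / (1 - Real.exp (-2 * a * β)) = (-2*β)/(Real.exp (-2*a*β) - 1) := by
      rw [div_eq_div_iff (by nlinarith) (by linarith)]; ring
    rw [h1]
    have h2 : (-2*β)/(Real.exp (-2*a*β) - 1) ≤ (-2*β)/(-2*a*β) := by
      gcongr
      · linarith
      · linarith
    have h3 : (-2*β)/(-2*a*β) = 1/a := by
      rw [div_eq_div_iff (by nlinarith) (by linarith)]; ring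
    have h4 : (1:ℝ)/a ≤ Real.exp (2*a*M)/a := by gcongr
    linarith
  · have hx : 0 < 2*a*β := by nlinarith
    have hep : 0 < Real.exp (-(2*a*β)) := Real.exp_pos _
    have he : 2*a*β + 1 ≤ Real.exp (2*a*β) := by
      have := Real.add_one_le_exp (2*a*β); linarith
    have key : 2*a*β * Real.exp (-(2*a*β)) ≤ 1 - Real.exp (-(2*a*β)) := by
      have : Real.exp (-(2*a*β)) = 1 / Real.exp (2*a*β) := by
        rw [Real.exp_neg]; ring
      rw [this, mul_one_div, div_le_iff₀ (Real.exp_pos _)]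
      have hEx : (1 - 1/Real.exp (2*a*β)) * Real.exp (2*a*β) = Real.exp (2*a*β) - 1 := by
        field_simp
      rw [hEx]; linarith
    have hden : 0 < 1 - Real.exp (-(2*a*β)) := lt_of_lt_of_le (by positivity) key
    have hrw : -2*a*β = -(2*a*β) := by ring
    rw [hrw]
    have h2 : 2 * β / (1 - Real.exp (-(2*a*β))) ≤ 2*β / (2*a*β * Real.exp (-(2*a*β))) := by
      gcongr
    have h3 : 2*β / (2*a*β * Real.exp (-(2*a*β))) = Real.exp (2*a*β) / a := by
      rw [Real.exp_neg, div_eq_div_iff (by positivity) (by linarith)]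
      field_simp
    have h4 : Real.exp (2*a*β)/a ≤ Real.exp (2*a*M)/a := by
      have : Real.exp (2*a*β) ≤ Real.exp (2*a*M) :=
        Real.exp_le_exp.mpr (by nlinarith [le_of_abs_le hM])
      gcongr
    linarith

noncomputable def Gram (a : ℝ) (l m : ℂ) : ℂ :=
  ∫ t in Set.Ioo (0:ℝ) a, ((normFac a l : ℂ) * Complex.exp (I*l*t)) *
    ((starRingEnd ℂ) ((normFac a m : ℂ) * Complex.exp (I*m*t)))

lemma gram_eq (a : ℝ) (l m : ℂ) :
    Gram a l m = ((normFac a l : ℝ) * (normFac a m : ℝ) : ℝ) *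
      ∫ t in Set.Ioo (0:ℝ) a, Complex.exp (I*(l - (starRingEnd ℂ) m)*t) := by
  rw [Gram, ← MeasureTheory.integral_const_mul]
  congr 1
  ext t
  rw [← mul_conj_cexp l m t]
  simp only [map_mul, Complex.conj_ofReal]
  push_cast
  ring

lemma gram_diag (a : ℝ) (ha : 0 < a) (l : ℂ) : Gram a l l = 1 := by
  rw [gram_eq]
  have hkey : I * (l - (starRingEnd ℂ) l) = ((-2 * l.im : ℝ) : ℂ) := by
    apply Complex.ext
    · simp
      ring
    · simp
  rw [hkey]
  by_cases h : l.im = 0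
  · simp only [h, normFac, if_pos h]
    norm_num
    rw [max_eq_left ha.le]
    have h1 : Real.sqrt a ≠ 0 := by positivity
    have hreal : (Real.sqrt a)⁻¹ * (Real.sqrt a)⁻¹ * a = 1 := by
      rw [← Real.mul_self_sqrt ha.le]
      field_simp
      rw [Real.sqrt_sq (Real.sqrt_nonneg a)]
    rw [show ((Real.sqrt a : ℝ) : ℂ)⁻¹ * ((Real.sqrt a : ℝ) : ℂ)⁻¹ * (a:ℂ) =
      (((Real.sqrt a)⁻¹ * (Real.sqrt a)⁻¹ * a : ℝ) : ℂ) by push_cast; ring, hreal]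
    norm_num
  · have hβ := h
    have hc : ((-2 * l.im : ℝ) : ℂ) ≠ 0 := by
      simp only [ne_eq, Complex.ofReal_eq_zero]
      intro hh; apply hβ; linarith
    rw [integral_cexp_Ioo a ha _ hc]
    simp only [normFac, if_neg h]
    rw [show ((-2 * l.im : ℝ) : ℂ) * (a : ℂ) = ((-2 * l.im * a : ℝ) : ℂ) by push_cast; ring]
    rw [← Complex.ofReal_exp]
    have harg := normFacArg_pos a l.im ha hβ
    have hsq : Real.sqrt (2 * l.im / (1 - Real.exp (-2 * a * l.im))) *
        Real.sqrt (2 * l.im / (1 - Real.exp (-2 * a * l.im))) =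
        2 * l.im / (1 - Real.exp (-2 * a * l.im)) :=
      Real.mul_self_sqrt harg.le
    rw [show ((Real.exp (-2*l.im*a) : ℝ) : ℂ) - 1 = ((Real.exp (-2*l.im*a) - 1 : ℝ) : ℂ) by
      push_cast; ring]
    rw [show ((Real.exp (-2*l.im*a) - 1 : ℝ) : ℂ) / ((-2 * l.im : ℝ) : ℂ) =
      (((Real.exp (-2*l.im*a) - 1) / (-2 * l.im) : ℝ) : ℂ) by push_cast; ring]
    have hd := denom_ne a l.im ha hβ
    have h2 : (2:ℝ)*l.im ≠ 0 := by simp [hβ]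
    have hreal : Real.sqrt (2 * l.im / (1 - Real.exp (-2 * a * l.im))) *
        Real.sqrt (2 * l.im / (1 - Real.exp (-2 * a * l.im))) *
        ((Real.exp (-2 * l.im * a) - 1) / (-2 * l.im)) = 1 := by
      rw [hsq, show -2*l.im*a = -2*a*l.im by ring, div_mul_div_comm,
        div_eq_one_iff_eq (mul_ne_zero hd (by simpa using hβ))]
      ring
    rw [← Complex.ofReal_mul, hreal]
    norm_num

lemma integrable_aux (a : ℝ) (c1 c2 l m : ℂ) :
    IntegrableOn (fun t : ℝ => (c1 * Complex.exp (I*l*t)) *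
      ((starRingEnd ℂ) (c2 * Complex.exp (I*m*t)))) (Set.Ioo 0 a) := by
  apply IntegrableOn.mono_set (t := Set.Ioc 0 a) _ Set.Ioo_subset_Ioc_self
  apply Continuous.integrableOn_Ioc
  apply Continuous.mul (by fun_prop)
  exact Continuous.comp continuous_star (by fun_prop)

lemma norm_sq_re (z : ℂ) : ‖z‖^2 = (z * (starRingEnd ℂ) z).re := by
  rw [Complex.mul_conj]
  simp [Complex.normSq_eq_norm_sq]
  norm_cast

lemma expand (a : ℝ) (lam : ℕ → ℂ) (s : Finset ℕ) (u : ℕ → ℂ) :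
    (∫ t in Set.Ioo (0:ℝ) a,
        ‖∑ n ∈ s, u n * (normFac a (lam n) : ℂ) * Complex.exp (Complex.I * lam n * t)‖ ^ 2)
    = ∑ n ∈ s, ∑ m ∈ s, (u n * (starRingEnd ℂ) (u m) * Gram a (lam n) (lam m)).re := by
  have hint : ∀ n m : ℕ, IntegrableOn (fun t : ℝ =>
      (u n * (normFac a (lam n) : ℂ) * Complex.exp (I * lam n * t)) *
      ((starRingEnd ℂ) (u m * (normFac a (lam m) : ℂ) * Complex.exp (I * lam m * t))))
      (Set.Ioo 0 a) := by
    intro n m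
    have := integrable_aux a (u n * (normFac a (lam n) : ℂ)) (u m * (normFac a (lam m) : ℂ))
      (lam n) (lam m)
    simpa [mul_assoc] using this
  have step1 : ∀ t : ℝ,
      ‖∑ n ∈ s, u n * (normFac a (lam n) : ℂ) * Complex.exp (Complex.I * lam n * t)‖ ^ 2
      = ∑ n ∈ s, ∑ m ∈ s, ((u n * (normFac a (lam n) : ℂ) * Complex.exp (I * lam n * t)) *
        ((starRingEnd ℂ) (u m * (normFac a (lam m) : ℂ) * Complex.exp (I * lam m * t)))).re := by
    intro t
    rw [norm_sq_re, map_sum, Finset.sum_mul_sum]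
    rw [Complex.re_sum]
    exact Finset.sum_congr rfl fun n _ => (Complex.re_sum _ _)
  rw [MeasureTheory.integral_congr_ae (Filter.Eventually.of_forall fun t => step1 t)]
  rw [MeasureTheory.integral_finset_sum]
  · apply Finset.sum_congr rfl
    intro n _
    rw [MeasureTheory.integral_finset_sum]
    · apply Finset.sum_congr rfl
      intro m _
      have h1 := integral_re (hint n m)
      simp only [RCLike.re_eq_complex_re] at h1 ⊢
      rw [h1]
      congr 1
      have : (fun t : ℝ =>
          (u n * (normFac a (lam n) : ℂ) * Complex.exp (I * lam n * t)) *
          ((starRingEnd ℂ) (u m * (normFac a (lam m) : ℂ) * Complex.exp (I * lam m * t))))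
          = fun t : ℝ => (u n * (starRingEnd ℂ) (u m)) *
            (((normFac a (lam n) : ℂ) * Complex.exp (I*(lam n)*t)) *
             ((starRingEnd ℂ) ((normFac a (lam m) : ℂ) * Complex.exp (I*(lam m)*t)))) := by
        ext t
        simp only [map_mul]
        ring
      rw [this, MeasureTheory.integral_const_mul, Gram, mul_assoc]
    · intro m _
      exact (hint n m).re
  · intro n _
    apply MeasureTheory.integrable_finset_sum
    intro m _
    exact (hint n m).re

lemma normFac_nonneg (a : ℝ) (l : ℂ) : 0 ≤ normFac a l := by
  unfold normFac; split <;> exact Real.sqrt_nonneg _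

lemma normFac_sq_le (a M : ℝ) (l : ℂ) (ha : 0 < a) (hM : |l.im| ≤ M) :
    normFac a l * normFac a l ≤ Real.exp (2*a*M)/a := by
  have hM0 : 0 ≤ M := le_trans (abs_nonneg _) hM
  have hexpM : (1:ℝ) ≤ Real.exp (2*a*M) := by
    rw [← Real.exp_zero]; exact Real.exp_le_exp.mpr (by nlinarith)
  unfold normFac
  by_cases h : l.im = 0
  · rw [if_pos h, Real.mul_self_sqrt (by positivity), one_div, div_eq_mul_inv]
    nlinarith [inv_pos.mpr ha]
  · rw [if_neg h]
    rcases le_or_gt (2 * l.im / (1 - Real.exp (-2 * a * l.im))) 0 with hc | hc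
    · rw [Real.sqrt_eq_zero_of_nonpos hc]; norm_num; positivity
    · rw [Real.mul_self_sqrt hc.le]
      exact normFacArg_le a M l.im ha hM h

lemma gram_offdiag_bound (a M : ℝ) (l m : ℂ) (ha : 0 < a) (hl : |l.im| ≤ M)
    (hm : |m.im| ≤ M) (hne : l - (starRingEnd ℂ) m ≠ 0) :
    ‖Gram a l m‖ ≤
      (Real.exp (2*a*M)/a) * (Real.exp (2*a*M) + 1) / ‖l - (starRingEnd ℂ) m‖ := by
  have hM0 : 0 ≤ M := le_trans (abs_nonneg _) hl
  have hc : Complex.I * (l - (starRingEnd ℂ) m) ≠ 0 := mul_ne_zero Complex.I_ne_zero hne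
  rw [gram_eq, integral_cexp_Ioo a ha _ hc]
  rw [norm_mul, norm_div, Complex.norm_real, Real.norm_eq_abs, norm_mul, Complex.norm_I, one_mul]
  have h1 : |normFac a l * normFac a m| ≤ Real.exp (2*a*M)/a := by
    rw [_root_.abs_of_nonneg (mul_nonneg (normFac_nonneg a l) (normFac_nonneg a m))]
    nlinarith [normFac_sq_le a M l ha hl, normFac_sq_le a M m ha hm,
      normFac_nonneg a l, normFac_nonneg a m, sq_nonneg (normFac a l - normFac a m)]
  have h2 : ‖Complex.exp (Complex.I * (l - (starRingEnd ℂ) m) * a) - 1‖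
      ≤ Real.exp (2*a*M) + 1 := by
    calc ‖Complex.exp (Complex.I * (l - (starRingEnd ℂ) m) * a) - 1‖
        ≤ ‖Complex.exp (Complex.I * (l - (starRingEnd ℂ) m) * a)‖ + 1 := by
          simpa using norm_sub_le _ (1:ℂ)
      _ ≤ Real.exp (2*a*M) + 1 := by
          gcongr
          rw [Complex.norm_exp]
          apply Real.exp_le_exp.mpr
          have : (Complex.I * (l - (starRingEnd ℂ) m) * (a:ℂ)).re = -a * (l.im + m.im) := by
            simp [Complex.mul_re, Complex.sub_im, Complex.conj_im]
            ring
          rw [this]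
          nlinarith [abs_le.mp hl, abs_le.mp hm]
  have hpos : 0 < ‖l - (starRingEnd ℂ) m‖ := by
    simpa [norm_pos_iff] using hne
  rw [mul_div_assoc']
  gcongr

lemma gram_abs_symm (a : ℝ) (l m : ℂ) :
    ‖Gram a m l‖ = ‖Gram a l m‖ := by
  have : Gram a m l = (starRingEnd ℂ) (Gram a l m) := by
    rw [Gram, Gram, ← integral_conj]
    congr 1
    ext t
    simp only [map_mul, Complex.conj_conj, Complex.conj_ofReal]
    ring
  rw [this, Complex.norm_conj]

lemma geom_finset_sum_le (q : ℝ) (hq : 1 < q) (t : Finset ℕ) :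
    ∑ d ∈ t, (1/q)^d ≤ (1 - 1/q)⁻¹ := by
  have h0 : (0:ℝ) ≤ 1/q := by positivity
  have h1 : 1/q < 1 := by
    rw [div_lt_one (by linarith)]; linarith
  calc ∑ d ∈ t, (1/q)^d ≤ ∑' d : ℕ, (1/q)^d :=
        Summable.sum_le_tsum t (fun i _ => by positivity) (summable_geometric_of_lt_one h0 h1)
    _ = (1 - 1/q)⁻¹ := tsum_geometric_of_lt_one h0 h1

end Aux

set_option maxHeartbeats 1000000 in
/-- Lacunary sequences with bounded imaginary parts give asymptotically orthonormal
sequences of normalized exponentials `χ^a_{λ_n}(t) = normFac a λ_n · e^{iλ_n t}` in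
`L²(0,a)`. -/
theorem stmt18 (lam : ℕ → ℂ)
    (hIm : ∃ M : ℝ, ∀ n, |(lam n).im| ≤ M)
    (q : ℝ) (hq : 1 < q)
    (hlac : ∀ n, q * ‖lam n‖ < ‖lam (n + 1)‖)
    (a : ℝ) (ha : 0 < a) :
    ∃ (N₀ : ℕ) (c C : ℕ → ℝ),
      Tendsto c atTop (nhds 1) ∧ Tendsto C atTop (nhds 1) ∧
      ∀ N ≥ N₀, 0 < c N ∧ 0 < C N ∧
        ∀ (s : Finset ℕ) (u : ℕ → ℂ), (∀ n ∈ s, N ≤ n) →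
          c N * ∑ n ∈ s, ‖u n‖ ^ 2 ≤
            (∫ t in Set.Ioo (0:ℝ) a,
              ‖∑ n ∈ s, u n * (normFac a (lam n) : ℂ) *
                Complex.exp (Complex.I * lam n * t)‖ ^ 2) ∧
          (∫ t in Set.Ioo (0:ℝ) a,
              ‖∑ n ∈ s, u n * (normFac a (lam n) : ℂ) *
                Complex.exp (Complex.I * lam n * t)‖ ^ 2) ≤
            C N * ∑ n ∈ s, ‖u n‖ ^ 2 := by
  obtain ⟨M, hM⟩ := hIm
  have hM0 : 0 ≤ M := le_trans (abs_nonneg _) (hM 0)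
  have hq0 : 0 < q := by linarith
  set K : ℝ := (Real.exp (2*a*M)/a) * (Real.exp (2*a*M) + 1) with hKdef
  have hK : 0 < K := by positivity
  set r : ℕ → ℝ := fun n => ‖lam n‖ with hrdef
  have hr0 : ∀ n, 0 ≤ r n := fun n => norm_nonneg _
  have hgrow : ∀ n k, q^k * r n ≤ r (n+k) := by
    intro n k
    induction k with
    | zero => simp
    | succ k ih =>
      have h1 := (hlac (n+k)).le
      calc q^(k+1) * r n = q * (q^k * r n) := by ring
        _ ≤ q * r (n+k) := by nlinarith
        _ ≤ r (n+k+1) := h1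
  have hmono : ∀ n m, n ≤ m → r n ≤ r m := by
    intro n m h
    have h1 := hgrow n (m - n)
    rw [Nat.add_sub_cancel' h] at h1
    nlinarith [one_le_pow₀ hq.le (n := m - n), hr0 n]
  have hr1 : 0 < r 1 := lt_of_le_of_lt (by positivity) (hlac 0)
  have htend : Tendsto r atTop atTop := by
    rw [tendsto_atTop]
    intro b
    have h2 : Tendsto (fun k : ℕ => q^k * r 1) atTop atTop :=
      (tendsto_pow_atTop_atTop_of_one_lt hq).atTop_mul_const hr1
    obtain ⟨k, hk⟩ := (tendsto_atTop.mp h2 b).exists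
    rw [eventually_atTop]
    refine ⟨1 + k, fun n hn => ?_⟩
    calc b ≤ q^k * r 1 := hk
      _ ≤ r (1+k) := hgrow 1 k
      _ ≤ r n := hmono _ _ hn
  set B : ℝ := 2*K*q/(q-1) * (2 * (1-1/q)⁻¹) with hBdef
  have hB : 0 < B := by
    have : (0:ℝ) < (1-1/q)⁻¹ := by
      rw [inv_pos]
      have : 1/q < 1 := by rw [div_lt_one hq0]; linarith
      linarith
    have hq1 : 0 < q - 1 := by linarith
    positivity
  set ε : ℕ → ℝ := fun N => B / max 1 (r N) with hεdef
  have hεpos : ∀ N, 0 < ε N := fun N => div_pos hB (lt_of_lt_of_le one_pos (le_max_left _ _))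
  have hεtend : Tendsto ε atTop (nhds 0) := by
    have h1 : Tendsto (fun N => max 1 (r N)) atTop atTop :=
      tendsto_atTop_mono (fun n => le_max_right 1 (r n)) htend
    have h2 := h1.inv_tendsto_atTop
    have h3 := h2.const_mul B
    simpa [hεdef, div_eq_mul_inv, Pi.inv_def] using h3
  -- choose N₀
  have hev : ∀ᶠ N in atTop, max 1 (2*M/(q-1)) ≤ r N ∧ 2*B ≤ r N ∧ 1 ≤ N := by
    filter_upwards [tendsto_atTop.mp htend (max 1 (2*M/(q-1))),
      tendsto_atTop.mp htend (2*B), eventually_ge_atTop 1] with N h1 h2 h3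
    exact ⟨h1, h2, h3⟩
  obtain ⟨N₀, hN₀⟩ := eventually_atTop.mp hev
  refine ⟨N₀, fun N => 1 - ε N, fun N => 1 + ε N, ?_, ?_, ?_⟩
  · simpa using tendsto_const_nhds.sub hεtend
  · simpa using tendsto_const_nhds.add hεtend
  intro N hN
  obtain ⟨hrN1, hrN2, _hN1⟩ := hN₀ N hN
  have hrN1' : 1 ≤ r N := le_trans (le_max_left _ _) hrN1
  have hrNM : 2*M/(q-1) ≤ r N := le_trans (le_max_right _ _) hrN1
  have hrNpos : 0 < r N := lt_of_lt_of_le one_pos hrN1'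
  have hmaxr : max 1 (r N) = r N := max_eq_right hrN1'
  have hεN : ε N ≤ 1/2 := by
    rw [hεdef]
    simp only [hmaxr]
    rw [div_le_iff₀ hrNpos]
    nlinarith
  refine ⟨by show (0:ℝ) < 1 - ε N; linarith [hεN], by show (0:ℝ) < 1 + ε N; linarith [hεpos N], ?_⟩
  intro s u hs
  -- distance lower bound
  have hdist : ∀ n m, N ≤ m → m < n →
      (1/2) * ((q-1) * q^(n-m-1)) * r N ≤ ‖lam n - (starRingEnd ℂ) (lam m)‖ := by
    intro n m hNm hmn
    have hre : |(lam n).re - (lam m).re| ≤ ‖lam n - (starRingEnd ℂ) (lam m)‖ := by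
      have := Complex.abs_re_le_norm (lam n - (starRingEnd ℂ) (lam m))
      simpa [Complex.sub_re, Complex.conj_re] using this
    have h1 : r n - M - r m ≤ |(lam n).re - (lam m).re| := by
      have ha1 : r n ≤ |(lam n).re| + |(lam n).im| := Complex.norm_le_abs_re_add_abs_im _
      have ha2 : |(lam m).re| ≤ r m := Complex.abs_re_le_norm _
      have ha3 : |(lam n).im| ≤ M := hM n
      have := abs_sub_abs_le_abs_sub ((lam n).re) ((lam m).re)
      linarith
    have hd1 : 1 ≤ n - m := by omega
    have h2 : q^(n-m) * r m ≤ r n := by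
      have := hgrow m (n - m)
      rwa [Nat.add_sub_cancel' (le_of_lt hmn)] at this
    have h3 : r N ≤ r m := hmono _ _ hNm
    have hqd : q^(n-m-1) * (q-1) ≤ q^(n-m) - 1 := by
      have : q^(n-m) = q^(n-m-1) * q := by
        rw [← pow_succ]
        congr 1
        omega
      rw [this]
      nlinarith [one_le_pow₀ hq.le (n := n-m-1)]
    have hpow1 : (1:ℝ) ≤ q^(n-m-1) := one_le_pow₀ hq.le
    -- (q^d - 1) r N - M ≥ (1/2)(q-1)q^{d-1} r N
    have hMhalf : M ≤ (1/2) * (q-1) * r N := by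
      rw [div_le_iff₀ (by linarith : (0:ℝ) < q - 1)] at hrNM
      linarith
    have : (q^(n-m) - 1) * r N - M ≤ ‖lam n - (starRingEnd ℂ) (lam m)‖ := by
      have : (q^(n-m) - 1) * r N ≤ r n - r m := by
        calc (q^(n-m) - 1) * r N ≤ (q^(n-m) - 1) * r m := by
              apply mul_le_mul_of_nonneg_left h3
              nlinarith [one_le_pow₀ hq.le (n := n-m)]
          _ ≤ r n - r m := by nlinarith
      linarith
    have hA : (q-1) * q^(n-m-1) * r N ≤ (q^(n-m) - 1) * r N := by
      apply mul_le_mul_of_nonneg_right _ hrNpos.le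
      linarith [hqd]
    have hfin : (1/2) * ((q-1) * q^(n-m-1)) * r N ≤ (q^(n-m) - 1) * r N - M := by
      have hpos2 : (0:ℝ) ≤ (1/2)*(q-1)*r N := by nlinarith
      have hB1 : (1/2)*(q-1)*r N ≤ (1/2)*((q-1)*q^(n-m-1))*r N := by
        nlinarith [mul_le_mul_of_nonneg_left hpow1 hpos2]
      linarith [hA, hMhalf, hB1]
    linarith
  -- per-entry off-diagonal bound
  have hentry : ∀ n m, N ≤ m → N ≤ n → m ≠ n →
      ‖Gram a (lam n) (lam m)‖ ≤
        2*K*q/((q-1) * r N) * (1/q)^(if m < n then n - m else m - n) := by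
    intro n m hNm hNn hne
    have hsym : ∀ n m, N ≤ m → m < n →
        ‖Gram a (lam n) (lam m)‖ ≤ 2*K*q/((q-1) * r N) * (1/q)^(n-m) := by
      intro n m hNm hmn
      have hd := hdist n m hNm hmn
      have hq1 : (0:ℝ) < q - 1 := by linarith
      have hlhs : (0:ℝ) < 1/2 * ((q-1) * q^(n-m-1)) * r N :=
        mul_pos (mul_pos (by norm_num) (mul_pos hq1 (pow_pos hq0 _))) hrNpos
      have hdpos : 0 < ‖lam n - (starRingEnd ℂ) (lam m)‖ :=
        lt_of_lt_of_le hlhs hd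
      have hne' : lam n - (starRingEnd ℂ) (lam m) ≠ 0 := by
        intro h
        rw [h] at hdpos
        simp at hdpos
      have hb := gram_offdiag_bound a M (lam n) (lam m) ha (hM n) (hM m) hne'
      rw [← hKdef] at hb
      calc ‖Gram a (lam n) (lam m)‖
          ≤ K / ‖lam n - (starRingEnd ℂ) (lam m)‖ := hb
        _ ≤ K / ((1/2) * ((q-1) * q^(n-m-1)) * r N) := by
            exact div_le_div_of_nonneg_left hK.le hlhs hd
        _ = 2*K*q/((q-1) * r N) * (1/q)^(n-m) := by
            have hqd : (q:ℝ)^(n-m) = q^(n-m-1) * q := by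
              rw [← pow_succ]; congr 1; omega
            rw [div_pow, one_pow, hqd]
            have h1 : (0:ℝ) < q^(n-m-1) := by positivity
            field_simp
    rcases lt_or_gt_of_ne hne with h | h
    · rw [if_pos h]
      exact hsym n m hNm h
    · rw [if_neg (by omega)]
      rw [← gram_abs_symm]
      exact hsym m n hNn h
  -- row sums
  have hrow : ∀ n ∈ s, ∑ m ∈ s.erase n, ‖Gram a (lam n) (lam m)‖ ≤ ε N := by
    intro n hn
    have hsplit : s.erase n ⊆ (s.filter (· < n)) ∪ (s.filter (n < ·)) := by
      intro m hm
      rw [Finset.mem_erase] at hm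
      rcases lt_or_gt_of_ne hm.1 with h | h
      · exact Finset.mem_union_left _ (Finset.mem_filter.mpr ⟨hm.2, h⟩)
      · exact Finset.mem_union_right _ (Finset.mem_filter.mpr ⟨hm.2, h⟩)
    have hCpos : 0 < 2*K*q/((q-1) * r N) := by
      have : (0:ℝ) < q - 1 := by linarith
      positivity
    calc ∑ m ∈ s.erase n, ‖Gram a (lam n) (lam m)‖
        ≤ ∑ m ∈ (s.filter (· < n)) ∪ (s.filter (n < ·)),
            ‖Gram a (lam n) (lam m)‖ := by
          apply Finset.sum_le_sum_of_subset_of_nonneg hsplit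
          intro m _ _
          exact norm_nonneg _
      _ = ∑ m ∈ s.filter (· < n), ‖Gram a (lam n) (lam m)‖ +
          ∑ m ∈ s.filter (n < ·), ‖Gram a (lam n) (lam m)‖ := by
          apply Finset.sum_union
          rw [Finset.disjoint_filter]
          intro m _ h1
          omega
      _ ≤ (2*K*q/((q-1) * r N)) * (1-1/q)⁻¹ + (2*K*q/((q-1) * r N)) * (1-1/q)⁻¹ := by
          gcongr ?_ + ?_
          · calc ∑ m ∈ s.filter (· < n), ‖Gram a (lam n) (lam m)‖
                ≤ ∑ m ∈ s.filter (· < n), 2*K*q/((q-1) * r N) * (1/q)^(n-m) := by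
                  apply Finset.sum_le_sum
                  intro m hm
                  rw [Finset.mem_filter] at hm
                  have := hentry n m (hs m hm.1) (hs n hn) (by omega)
                  rwa [if_pos hm.2] at this
              _ = 2*K*q/((q-1) * r N) * ∑ m ∈ s.filter (· < n), (1/q)^(n-m) := by
                  rw [Finset.mul_sum]
              _ ≤ 2*K*q/((q-1) * r N) * (1-1/q)⁻¹ := by
                  apply mul_le_mul_of_nonneg_left _ hCpos.le
                  rw [show ∑ m ∈ s.filter (· < n), (1/q:ℝ)^(n-m)
                      = ∑ d ∈ (s.filter (· < n)).image (fun m => n - m), (1/q:ℝ)^d by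
                    rw [Finset.sum_image]
                    intro x hx y hy hxy
                    simp only [Finset.coe_filter, Set.mem_setOf_eq] at hx hy hxy
                    omega]
                  exact geom_finset_sum_le q hq _
          · calc ∑ m ∈ s.filter (n < ·), ‖Gram a (lam n) (lam m)‖
                ≤ ∑ m ∈ s.filter (n < ·), 2*K*q/((q-1) * r N) * (1/q)^(m-n) := by
                  apply Finset.sum_le_sum
                  intro m hm
                  rw [Finset.mem_filter] at hm
                  have := hentry n m (hs m hm.1) (hs n hn) (by omega)
                  rwa [if_neg (by omega)] at this
              _ = 2*K*q/((q-1) * r N) * ∑ m ∈ s.filter (n < ·), (1/q)^(m-n) := by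
                  rw [Finset.mul_sum]
              _ ≤ 2*K*q/((q-1) * r N) * (1-1/q)⁻¹ := by
                  apply mul_le_mul_of_nonneg_left _ hCpos.le
                  rw [show ∑ m ∈ s.filter (n < ·), (1/q:ℝ)^(m-n)
                      = ∑ d ∈ (s.filter (n < ·)).image (fun m => m - n), (1/q:ℝ)^d by
                    rw [Finset.sum_image]
                    intro x hx y hy hxy
                    simp only [Finset.coe_filter, Set.mem_setOf_eq] at hx hy hxy
                    omega]
                  exact geom_finset_sum_le q hq _
      _ = B / r N := by
          have h1 : q - 1 ≠ 0 := sub_ne_zero.mpr hq.ne'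
          have h2 : r N ≠ 0 := hrNpos.ne'
          rw [hBdef]
          field_simp
          ring
      _ = ε N := by rw [hεdef]; simp [hmaxr]
  -- main estimate
  set T : ℝ := ∑ n ∈ s, ‖u n‖ ^ 2 with hTdef
  have hT0 : 0 ≤ T := Finset.sum_nonneg fun n _ => by positivity
  set R : ℝ := ∑ n ∈ s, ∑ m ∈ s.erase n,
    (u n * (starRingEnd ℂ) (u m) * Gram a (lam n) (lam m)).re with hRdef
  have hIexp : (∫ t in Set.Ioo (0:ℝ) a,
      ‖∑ n ∈ s, u n * (normFac a (lam n) : ℂ) * Complex.exp (Complex.I * lam n * t)‖ ^ 2)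
      = T + R := by
    rw [expand a lam s u, hTdef, hRdef, ← Finset.sum_add_distrib]
    apply Finset.sum_congr rfl
    intro n hn
    rw [← Finset.sum_erase_add s _ hn, add_comm]
    congr 1
    rw [gram_diag a ha, mul_one, Complex.mul_conj]
    simp [Complex.normSq_eq_norm_sq]
    norm_cast
  have hRbound : |R| ≤ ε N * T := by
    have h1 : |R| ≤ ∑ n ∈ s, ∑ m ∈ s.erase n,
        ‖u n‖ * ‖u m‖ * ‖Gram a (lam n) (lam m)‖ := by
      calc |R| ≤ ∑ n ∈ s, |∑ m ∈ s.erase n,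
            (u n * (starRingEnd ℂ) (u m) * Gram a (lam n) (lam m)).re| :=
            Finset.abs_sum_le_sum_abs _ _
        _ ≤ ∑ n ∈ s, ∑ m ∈ s.erase n,
            ‖u n‖ * ‖u m‖ * ‖Gram a (lam n) (lam m)‖ := by
            apply Finset.sum_le_sum
            intro n _
            calc |∑ m ∈ s.erase n, (u n * (starRingEnd ℂ) (u m) * Gram a (lam n) (lam m)).re|
                ≤ ∑ m ∈ s.erase n,
                  |(u n * (starRingEnd ℂ) (u m) * Gram a (lam n) (lam m)).re| :=
                  Finset.abs_sum_le_sum_abs _ _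
              _ ≤ ∑ m ∈ s.erase n, ‖u n‖ * ‖u m‖ * ‖Gram a (lam n) (lam m)‖ := by
                  apply Finset.sum_le_sum
                  intro m _
                  calc |(u n * (starRingEnd ℂ) (u m) * Gram a (lam n) (lam m)).re|
                      ≤ ‖u n * (starRingEnd ℂ) (u m) * Gram a (lam n) (lam m)‖ :=
                        Complex.abs_re_le_norm _
                    _ = ‖u n‖ * ‖u m‖ * ‖Gram a (lam n) (lam m)‖ := by
                        rw [norm_mul, norm_mul, Complex.norm_conj]
    have h2 : ∑ n ∈ s, ∑ m ∈ s.erase n,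
        ‖u n‖ * ‖u m‖ * ‖Gram a (lam n) (lam m)‖ ≤ ε N * T := by
      have hhalf : ∀ n ∈ s, ∀ m ∈ s.erase n,
          ‖u n‖ * ‖u m‖ * ‖Gram a (lam n) (lam m)‖ ≤
          (‖u n‖^2/2) * ‖Gram a (lam n) (lam m)‖ +
          (‖u m‖^2/2) * ‖Gram a (lam n) (lam m)‖ := by
        intro n _ m _
        have := norm_nonneg (Gram a (lam n) (lam m))
        nlinarith [sq_nonneg (‖u n‖ - ‖u m‖), norm_nonneg (u n), norm_nonneg (u m)]
      calc ∑ n ∈ s, ∑ m ∈ s.erase n, ‖u n‖ * ‖u m‖ * ‖Gram a (lam n) (lam m)‖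
          ≤ ∑ n ∈ s, ∑ m ∈ s.erase n,
            ((‖u n‖^2/2) * ‖Gram a (lam n) (lam m)‖ +
             (‖u m‖^2/2) * ‖Gram a (lam n) (lam m)‖) := by
            apply Finset.sum_le_sum
            intro n hn
            exact Finset.sum_le_sum (hhalf n hn)
        _ = ∑ n ∈ s, ∑ m ∈ s.erase n, (‖u n‖^2/2) * ‖Gram a (lam n) (lam m)‖ +
            ∑ n ∈ s, ∑ m ∈ s.erase n, (‖u m‖^2/2) * ‖Gram a (lam n) (lam m)‖ := by
            rw [← Finset.sum_add_distrib]
            apply Finset.sum_congr rfl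
            intro n _
            rw [← Finset.sum_add_distrib]
        _ ≤ (ε N / 2) * T + (ε N / 2) * T := by
            gcongr ?_ + ?_
            · calc ∑ n ∈ s, ∑ m ∈ s.erase n,
                  (‖u n‖^2/2) * ‖Gram a (lam n) (lam m)‖
                  = ∑ n ∈ s, (‖u n‖^2/2) *
                    ∑ m ∈ s.erase n, ‖Gram a (lam n) (lam m)‖ := by
                    apply Finset.sum_congr rfl
                    intro n _
                    rw [Finset.mul_sum]
                _ ≤ ∑ n ∈ s, (‖u n‖^2/2) * ε N := by
                    apply Finset.sum_le_sum
                    intro n hn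
                    apply mul_le_mul_of_nonneg_left (hrow n hn) (by positivity)
                _ = (ε N / 2) * T := by
                    rw [hTdef, Finset.mul_sum]
                    apply Finset.sum_congr rfl
                    intro n _
                    ring
            · calc ∑ n ∈ s, ∑ m ∈ s.erase n,
                  (‖u m‖^2/2) * ‖Gram a (lam n) (lam m)‖
                  = ∑ m ∈ s, ∑ n ∈ s.erase m,
                    (‖u m‖^2/2) * ‖Gram a (lam n) (lam m)‖ := by
                    apply Finset.sum_comm'
                    intro n m
                    simp only [Finset.mem_erase]
                    tauto
                _ = ∑ m ∈ s, (‖u m‖^2/2) *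
                    ∑ n ∈ s.erase m, ‖Gram a (lam m) (lam n)‖ := by
                    apply Finset.sum_congr rfl
                    intro m _
                    rw [Finset.mul_sum]
                    apply Finset.sum_congr rfl
                    intro n _
                    rw [gram_abs_symm]
                _ ≤ ∑ m ∈ s, (‖u m‖^2/2) * ε N := by
                    apply Finset.sum_le_sum
                    intro m hm
                    apply mul_le_mul_of_nonneg_left (hrow m hm) (by positivity)
                _ = (ε N / 2) * T := by
                    rw [hTdef, Finset.mul_sum]
                    apply Finset.sum_congr rfl
                    intro m _
                    ring
        _ = ε N * T := by ring
    linarith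
  have habs := abs_le.mp hRbound
  constructor
  · show (1 - ε N) * T ≤ _
    rw [hIexp]
    nlinarith [hεpos N]
  · show _ ≤ (1 + ε N) * T
    rw [hIexp]
    nlinarith [hεpos N]
end
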